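/- Let C be a Type II Z4-code of length n (a self-dual submodule of (ZMod 4)^n all of whose codewords have Euclidean weight divisible by 8). Let 2u ∈ (ZMod 4)^n be an even vector (all coordinates in {0,2}) such that 2u ∉ C and the number of coordinates of 2u equal to 2 is even. Set C₀ = {v ∈ C : ⟨2u, v⟩ = 0}. Then the code C̃ = C₀ + span{2u} is again a Type II Z4-code of length n, i.e., C̃ is self-dual and every codeword of C̃ has Euclidean weight divisible by 8. -/

import Mathlib

open Finset

def z4Inner {n : ℕ} (x y : Fin n → ZMod 4) : ZMod 4 := ∑ i, x i * y i

def z4Dual {n : ℕ} (C : Set (Fin n → ZMod 4)) : Set (Fin n → ZMod 4) :=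
  {x | ∀ c ∈ C, z4Inner x c = 0}

def IsSelfDualZ4 {n : ℕ} (C : Set (Fin n → ZMod 4)) : Prop := C = z4Dual C

def euclWt {n : ℕ} (x : Fin n → ZMod 4) : ℕ :=
  ∑ i, (if x i = 0 then 0 else if x i = 2 then 4 else 1)

def IsTypeIIZ4 {n : ℕ} (C : Set (Fin n → ZMod 4)) : Prop :=
  IsSelfDualZ4 C ∧ ∀ c ∈ C, 8 ∣ euclWt c

def IsExtremalTypeIIZ4 (n : ℕ) (C : Set (Fin n → ZMod 4)) : Prop :=
  IsTypeIIZ4 C ∧ sInf (euclWt '' (C \ {0})) = 8 * (n / 24) + 8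

def IsEvenVec {n : ℕ} (x : Fin n → ZMod 4) : Prop := ∀ i, x i = 0 ∨ x i = 2

def Sset {n : ℕ} (w : Fin n → ZMod 4) (a : ZMod 4) : Finset (Fin n) :=
  Finset.univ.filter (fun j => w j = a)

def doubled {n : ℕ} (C : Set (Fin n → ZMod 4)) (tu : Fin n → ZMod 4) :
    Set (Fin n → ZMod 4) :=
  {w | ∃ v ∈ C, z4Inner tu v = 0 ∧ ∃ a : ZMod 4, w = v + a • tu}

def bInner {n : ℕ} (x y : Fin n → ZMod 2) : ZMod 2 := ∑ i, x i * y i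

def bDual {n : ℕ} (D : Set (Fin n → ZMod 2)) : Set (Fin n → ZMod 2) :=
  {x | ∀ y ∈ D, bInner x y = 0}

def hWt {n : ℕ} (x : Fin n → ZMod 2) : ℕ := (Finset.univ.filter fun i => x i ≠ 0).card

def IsTypeIIBin {n : ℕ} (D : Set (Fin n → ZMod 2)) : Prop :=
  D = bDual D ∧ ∀ y ∈ D, 4 ∣ hWt y

def IsExtremalTypeIIBin (n : ℕ) (D : Set (Fin n → ZMod 2)) : Prop :=
  IsTypeIIBin D ∧ sInf (hWt '' (D \ {0})) = 4 * (n / 24) + 4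

def residueSet {n : ℕ} (C : Set (Fin n → ZMod 4)) : Set (Fin n → ZMod 2) :=
  {y | ∃ c ∈ C, y = fun i => ZMod.castHom (by norm_num : (2:ℕ) ∣ 4) (ZMod 2) (c i)}

def torsionSet {n : ℕ} (C : Set (Fin n → ZMod 4)) : Set (Fin n → ZMod 2) :=
  {c | (fun i => 2 * ((c i).val : ZMod 4)) ∈ C}

def rInner {n : ℕ} (x y : Fin n → ℝ) : ℝ := ∑ i, x i * y i

def A4lattice {n : ℕ} (C : Set (Fin n → ZMod 4)) : Set (Fin n → ℝ) :=
  {x | ∃ z : Fin n → ℤ, (∀ i, 2 * x i = (z i : ℝ)) ∧ (fun i => (z i : ZMod 4)) ∈ C}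

def dualLattice {n : ℕ} (L : Set (Fin n → ℝ)) : Set (Fin n → ℝ) :=
  {y | ∀ x ∈ L, ∃ m : ℤ, rInner x y = (m : ℝ)}

def IsIntegralLattice {n : ℕ} (L : Set (Fin n → ℝ)) : Prop :=
  ∀ x ∈ L, ∀ y ∈ L, ∃ m : ℤ, rInner x y = (m : ℝ)

def IsEvenLattice {n : ℕ} (L : Set (Fin n → ℝ)) : Prop :=
  IsIntegralLattice L ∧ ∀ x ∈ L, ∃ m : ℤ, rInner x x = 2 * (m : ℝ)

def IsUnimodularLattice {n : ℕ} (L : Set (Fin n → ℝ)) : Prop :=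
  IsIntegralLattice L ∧ L = dualLattice L

def MonomiallyEquiv {n : ℕ} (C D : Set (Fin n → ZMod 4)) : Prop :=
  ∃ (σ : Equiv.Perm (Fin n)) (ε : Fin n → ZMod 4), (∀ i, ε i = 1 ∨ ε i = 3) ∧
    D = (fun x => fun i => ε i * x (σ i)) '' C

section Aux
variable {n : ℕ}

lemma z4Inner_comm' (x y : Fin n → ZMod 4) : z4Inner x y = z4Inner y x := by
  simp [z4Inner, mul_comm]

lemma z4Inner_add_right' (x y z : Fin n → ZMod 4) :
    z4Inner x (y + z) = z4Inner x y + z4Inner x z := by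
  simp [z4Inner, mul_add, Finset.sum_add_distrib]

lemma z4Inner_sub_right' (x y z : Fin n → ZMod 4) :
    z4Inner x (y - z) = z4Inner x y - z4Inner x z := by
  simp [z4Inner, mul_sub, Finset.sum_sub_distrib]

lemma z4Inner_smul_right' (a : ZMod 4) (x y : Fin n → ZMod 4) :
    z4Inner x (a • y) = a * z4Inner x y := by
  simp [z4Inner, Finset.mul_sum, mul_left_comm]

lemma wt_mod8 (v tu : Fin n → ZMod 4) (hev : IsEvenVec tu)
    (h2 : Even (Sset tu 2).card) (hort : z4Inner tu v = 0) :
    (euclWt (v + tu) : ZMod 8) = (euclWt v : ZMod 8) := by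
  classical
  have coord : ∀ a b : ZMod 4, (b = 0 ∨ b = 2) →
      ((if a + b = 0 then 0 else if a + b = 2 then 4 else 1 : ℕ) : ZMod 8)
        = ((if a = 0 then 0 else if a = 2 then 4 else 1 : ℕ) : ZMod 8)
          + (if b = 2 ∧ (a = 0 ∨ a = 2) then 4 else 0) := by decide
  have coord2 : ∀ a b : ZMod 4, (b = 0 ∨ b = 2) →
      b * a = if b = 2 ∧ ¬(a = 0 ∨ a = 2) then 2 else 0 := by decide
  set E := (Finset.univ.filter (fun i : Fin n => tu i = 2 ∧ (v i = 0 ∨ v i = 2))).card with hE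
  set O := (Finset.univ.filter (fun i : Fin n => tu i = 2 ∧ ¬(v i = 0 ∨ v i = 2))).card with hO
  -- O is even
  have hsplit : E + O = (Sset tu 2).card := by
    rw [hE, hO, Sset, ← Finset.filter_filter, ← Finset.filter_filter,
      Finset.card_filter_add_card_filter_not]
  have hOinner : ((2 * O : ℕ) : ZMod 4) = 0 := by
    have : z4Inner tu v = ∑ i, (if tu i = 2 ∧ ¬(v i = 0 ∨ v i = 2) then (2 : ZMod 4) else 0) := by
      unfold z4Inner
      refine Finset.sum_congr rfl fun i _ => ?_
      exact coord2 (v i) (tu i) (hev i)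
    rw [this, Finset.sum_ite, Finset.sum_const, Finset.sum_const_zero, add_zero] at hort
    rw [hO, Nat.cast_mul]
    rw [nsmul_eq_mul] at hort
    rw [mul_comm]
    convert hort using 2
    norm_num
  have hOeven : Even O := by
    have h4 : (4 : ℕ) ∣ 2 * O := (ZMod.natCast_eq_zero_iff _ 4).mp hOinner
    rcases h4 with ⟨k, hk⟩
    exact ⟨k, by omega⟩
  have hEeven : Even E := by
    rcases h2 with ⟨s, hs⟩; rcases hOeven with ⟨o, ho⟩
    exact ⟨E / 2, by omega⟩
  -- main computation
  have : (euclWt (v + tu) : ZMod 8)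
      = (euclWt v : ZMod 8) + ∑ i, (if tu i = 2 ∧ (v i = 0 ∨ v i = 2) then (4 : ZMod 8) else 0) := by
    unfold euclWt
    push_cast
    rw [← Finset.sum_add_distrib]
    refine Finset.sum_congr rfl fun i _ => ?_
    have := coord (v i) (tu i) (hev i)
    push_cast at this ⊢
    simpa using this
  rw [this, Finset.sum_ite, Finset.sum_const, Finset.sum_const_zero, add_zero, ← hE]
  rcases hEeven with ⟨e, he⟩
  have : E • (4 : ZMod 8) = 0 := by
    rw [he, nsmul_eq_mul]
    push_cast
    ring_nf
    rw [show (e : ZMod 8) * 8 = 0 by simp [show (8 : ZMod 8) = 0 by decide]]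
  rw [this, add_zero]
end Aux



lemma even_smul_eq_zero {n : ℕ} (tu : Fin n → ZMod 4) (hev : IsEvenVec tu)
    (a : ZMod 4) (ha : a = 0 ∨ a = 2) : a • tu = 0 := by
  funext i
  rcases hev i with h | h <;> rcases ha with h' | h' <;>
    simp [h, h'] <;> decide

lemma odd_smul_eq_self {n : ℕ} (tu : Fin n → ZMod 4) (hev : IsEvenVec tu)
    (a : ZMod 4) (ha : a = 1 ∨ a = 3) : a • tu = tu := by
  funext i
  rcases hev i with h | h <;> rcases ha with h' | h' <;>
    simp [h, h'] <;> decide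

lemma z4Inner_add_left' {n : ℕ} (x y z : Fin n → ZMod 4) :
    z4Inner (x + y) z = z4Inner x z + z4Inner y z := by
  rw [z4Inner_comm', z4Inner_add_right', z4Inner_comm' z x, z4Inner_comm' z y]

lemma z4Inner_smul_left' {n : ℕ} (a : ZMod 4) (x y : Fin n → ZMod 4) :
    z4Inner (a • x) y = a * z4Inner x y := by
  rw [z4Inner_comm', z4Inner_smul_right', z4Inner_comm' y x]

lemma z4Inner_sub_left' {n : ℕ} (x y z : Fin n → ZMod 4) :
    z4Inner (x - y) z = z4Inner x z - z4Inner y z := by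
  rw [z4Inner_comm', z4Inner_sub_right', z4Inner_comm' z x, z4Inner_comm' z y]

lemma z4Inner_tu_mem {n : ℕ} (tu : Fin n → ZMod 4) (hev : IsEvenVec tu)
    (v : Fin n → ZMod 4) : z4Inner tu v = 0 ∨ z4Inner tu v = 2 := by
  have h2 : 2 * z4Inner tu v = 0 := by
    rw [z4Inner, Finset.mul_sum]
    refine Finset.sum_eq_zero fun i _ => ?_
    rcases hev i with h | h
    · simp [h]
    · rw [h, ← mul_assoc, show (2 : ZMod 4) * 2 = 0 by decide, zero_mul]
  revert h2
  generalize z4Inner tu v = c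
  revert c; decide

theorem stmt0 {n : ℕ} (C : Submodule (ZMod 4) (Fin n → ZMod 4))
    (hC : IsTypeIIZ4 (C : Set (Fin n → ZMod 4)))
    (tu : Fin n → ZMod 4) (hev : IsEvenVec tu) (htu : tu ∉ C)
    (h2 : Even (Sset tu 2).card) :
    IsTypeIIZ4 (doubled (C : Set (Fin n → ZMod 4)) tu) := by
  obtain ⟨hsd, hwt⟩ := hC
  rw [IsSelfDualZ4] at hsd
  have hCd : ∀ v ∈ C, ∀ w ∈ C, z4Inner v w = 0 := by
    intro v hv w hw
    have hw' : w ∈ z4Dual (C : Set (Fin n → ZMod 4)) := by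
      rw [← hsd]; exact hw
    rw [z4Inner_comm']
    exact hw' v hv
  have htt : z4Inner tu tu = 0 := by
    rw [z4Inner]
    refine Finset.sum_eq_zero fun i _ => ?_
    rcases hev i with h | h <;> rw [h] <;> decide
  have hv1 : ∃ v₁ ∈ C, z4Inner tu v₁ = 2 := by
    by_contra h
    push_neg at h
    apply htu
    have hmem : tu ∈ z4Dual (C : Set (Fin n → ZMod 4)) := by
      intro c hc
      rcases z4Inner_tu_mem tu hev c with h0 | h2'
      · exact h0
      · exact absurd h2' (h c hc)
    rw [← hsd] at hmem
    exact hmem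
  obtain ⟨v₁, hv₁C, hv₁⟩ := hv1
  have hmemD : ∀ v : Fin n → ZMod 4, v ∈ C → z4Inner tu v = 0 →
      v ∈ doubled (C : Set (Fin n → ZMod 4)) tu := by
    intro v hv h0
    exact ⟨v, hv, h0, 0, by simp⟩
  have htuD : tu ∈ doubled (C : Set (Fin n → ZMod 4)) tu := by
    refine ⟨0, Submodule.zero_mem C, by simp [z4Inner], 1, by simp⟩
  constructor
  · -- self-dual
    apply Set.eq_of_subset_of_subset
    · rintro w ⟨v, hv, hv0, a, rfl⟩ w' ⟨v', hv', hv'0, a', rfl⟩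
      simp only [z4Inner_add_right', z4Inner_smul_right', z4Inner_add_left',
        z4Inner_smul_left']
      rw [hCd v hv v' hv', z4Inner_comm' v tu, hv0, hv'0, htt]
      ring
    · intro x hx
      have hxt : z4Inner x tu = 0 := hx tu htuD
      have hx0 : ∀ v ∈ C, z4Inner tu v = 0 → z4Inner x v = 0 := by
        intro v hv h0
        exact hx v (hmemD v hv h0)
      have hphi2 : 2 * z4Inner x v₁ = 0 := by
        have h2v : (2 : ZMod 4) • v₁ ∈ C := Submodule.smul_mem C 2 hv₁C
        have h2v0 : z4Inner tu ((2 : ZMod 4) • v₁) = 0 := by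
          rw [z4Inner_smul_right', hv₁]; decide
        have h3 := hx0 _ h2v h2v0
        rwa [z4Inner_smul_right'] at h3
      have hphi : z4Inner x v₁ = 0 ∨ z4Inner x v₁ = 2 := by
        revert hphi2
        generalize z4Inner x v₁ = c
        revert c; decide
      rcases hphi with hphi | hphi
      · have hxC : x ∈ C := by
          have : x ∈ z4Dual (C : Set (Fin n → ZMod 4)) := by
            intro c hc
            rcases z4Inner_tu_mem tu hev c with h0 | h2'
            · exact hx0 c hc h0
            · have hsub : c - v₁ ∈ C := Submodule.sub_mem C hc hv₁C
              have hsub0 : z4Inner tu (c - v₁) = 0 := by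
                rw [z4Inner_sub_right', h2', hv₁]; ring
              have h4 := hx0 _ hsub hsub0
              rw [z4Inner_sub_right', hphi, sub_zero] at h4
              exact h4
          rw [← hsd] at this
          exact this
        exact hmemD x hxC (by rw [z4Inner_comm']; exact hxt)
      · have hxC : x - tu ∈ C := by
          have : x - tu ∈ z4Dual (C : Set (Fin n → ZMod 4)) := by
            intro c hc
            rw [z4Inner_sub_left']
            rcases z4Inner_tu_mem tu hev c with h0 | h2'
            · rw [hx0 c hc h0, h0, sub_zero]
            · have hsub : c - v₁ ∈ C := Submodule.sub_mem C hc hv₁C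
              have hsub0 : z4Inner tu (c - v₁) = 0 := by
                rw [z4Inner_sub_right', h2', hv₁]; ring
              have h4 := hx0 _ hsub hsub0
              rw [z4Inner_sub_right', hphi] at h4
              have hxc2 : z4Inner x c = 2 := by rwa [sub_eq_zero] at h4
              rw [hxc2, h2', sub_self]
          rw [← hsd] at this
          exact this
        refine ⟨x - tu, hxC, ?_, 1, by simp⟩
        rw [z4Inner_sub_right', htt, z4Inner_comm' tu x, hxt]; ring
  · -- weights
    rintro w ⟨v, hv, hv0, a, rfl⟩
    have ha : a = 0 ∨ a = 1 ∨ a = 2 ∨ a = 3 := by revert a; decide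
    have hbase := hwt v hv
    have key : 8 ∣ euclWt (v + tu) := by
      have h8 : (euclWt (v + tu) : ZMod 8) = (euclWt v : ZMod 8) :=
        wt_mod8 v tu hev h2 hv0
      have h0 : ((euclWt v : ℕ) : ZMod 8) = 0 := by
        rw [ZMod.natCast_eq_zero_iff]; exact hbase
      rw [h0] at h8
      exact (ZMod.natCast_eq_zero_iff _ 8).mp h8
    rcases ha with rfl | rfl | rfl | rfl
    · simpa [even_smul_eq_zero tu hev 0 (Or.inl rfl)] using hbase
    · rw [odd_smul_eq_self tu hev 1 (Or.inl rfl)]; exact key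
    · simpa [even_smul_eq_zero tu hev 2 (Or.inr rfl)] using hbase
    · rw [odd_smul_eq_self tu hev 3 (Or.inr rfl)]; exact key
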